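/- Let V : [a,b] → ℝ be nondecreasing with V' ≥ F(V) almost everywhere on [a,b], where F : ℝ → ℝ is nondecreasing and continuously differentiable. Let Y be a C² function on [a,b] satisfying Y' = F(Y) and Y(a) ≤ V(a). Then Y ≤ V on [a,b]. -/

import Mathlib

open MeasureTheory Set Function

/-- FTC inequality for monotone functions: the integral of the derivative is at most the
increment. -/
lemma monotone_integral_deriv_le {g : ℝ → ℝ} (hg : Monotone g) {s t : ℝ} (hst : s ≤ t) :
    IntegrableOn (deriv g) (Ioc s t) volume ∧ ∫ x in s..t, deriv g x ≤ g t - g s := by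
  set f := hg.stieltjesFunction with hf
  set μ := f.measure with hμ
  have hae : deriv g =ᵐ[(volume : Measure ℝ)] fun x => (μ.rnDeriv volume x).toReal := by
    filter_upwards [hg.ae_hasDerivAt] with x hx using hx.deriv
  have hIoc : μ (Ioc s t) ≠ ⊤ := by
    rw [hμ, StieltjesFunction.measure_Ioc]; exact ENNReal.ofReal_ne_top
  have hint2 : IntegrableOn (fun x => (μ.rnDeriv volume x).toReal) (Ioc s t) volume :=
    MeasureTheory.Measure.integrableOn_toReal_rnDeriv hIoc
  have hint : IntegrableOn (deriv g) (Ioc s t) volume := by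
    have hae' : deriv g =ᵐ[volume.restrict (Ioc s t)]
        fun x => (μ.rnDeriv volume x).toReal := ae_restrict_of_ae hae
    exact hint2.congr hae'.symm
  refine ⟨hint, ?_⟩
  rcases hst.eq_or_lt with rfl | hlt
  · simp
  have hIoo : μ (Ioo s t) ≠ ⊤ := fun h => hIoc (top_le_iff.1 (h ▸ measure_mono Ioo_subset_Ioc_self))
  have hfs : g s ≤ f s := by
    rw [hg.stieltjesFunction_eq]; exact hg.le_rightLim le_rfl
  have hlt' : leftLim (⇑f) t ≤ g t := by
    have hev : ∀ᶠ y in nhdsWithin t (Iio t), f y ≤ g t := by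
      filter_upwards [self_mem_nhdsWithin] with y hy
      rw [hg.stieltjesFunction_eq]
      exact hg.rightLim_le hy
    exact le_of_tendsto (f.mono.tendsto_leftLim t) hev
  calc ∫ x in s..t, deriv g x = ∫ x in Ioc s t, deriv g x := intervalIntegral.integral_of_le hst
    _ = ∫ x in Ioc s t, (μ.rnDeriv volume x).toReal := integral_congr_ae (ae_restrict_of_ae hae)
    _ = ∫ x in Ioo s t, (μ.rnDeriv volume x).toReal := by
        rw [integral_Ioc_eq_integral_Ioo]
    _ ≤ (μ (Ioo s t)).toReal := MeasureTheory.Measure.setIntegral_toReal_rnDeriv_le hIoo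
    _ ≤ g t - g s := by
        rw [hμ, StieltjesFunction.measure_Ioo]
        rcases le_or_gt (leftLim (⇑f) t - f s) 0 with h | h
        · rw [ENNReal.ofReal_eq_zero.2 h]
          simp only [ENNReal.toReal_zero, sub_nonneg]
          exact hg hst
        · rw [ENNReal.toReal_ofReal h.le]
          have := hg hst
          linarith

/-- ODE comparison lemma for rough solutions: if `V` is nondecreasing on `[a,b]` and
satisfies `V' ≥ F(V)` almost everywhere, `F` is nondecreasing and `C¹`, and `Y` is a
`C²` solution of `Y' = F(Y)` with `Y a ≤ V a`, then `Y ≤ V` on `[a,b]`. -/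
theorem ode_comparison (a b : ℝ) (hab : a ≤ b) (V F Y : ℝ → ℝ)
    (hVmono : MonotoneOn V (Icc a b))
    (hV' : ∀ᵐ t ∂(volume.restrict (Icc a b)), ∃ v : ℝ, HasDerivAt V v t ∧ F (V t) ≤ v)
    (hFmono : Monotone F) (hF : ContDiff ℝ 1 F)
    (hY : ContDiffOn ℝ 2 Y (Icc a b))
    (hYode : ∀ t ∈ Icc a b, HasDerivAt Y (F (Y t)) t)
    (hYa : Y a ≤ V a) :
    ∀ t ∈ Icc a b, Y t ≤ V t := by
  have haIcc : a ∈ Icc a b := ⟨le_rfl, hab⟩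
  have hbIcc : b ∈ Icc a b := ⟨hab, le_rfl⟩
  -- extend `V` to a monotone function `g` on all of `ℝ`
  obtain ⟨g, hgmono, hgV⟩ : ∃ g : ℝ → ℝ, Monotone g ∧ EqOn V g (Icc a b) := by
    obtain ⟨g, h1, h2⟩ := hVmono.exists_monotone_extension
      (⟨V a, by rintro y ⟨x, hx, rfl⟩; exact hVmono haIcc hx hx.1⟩)
      (⟨V b, by rintro y ⟨x, hx, rfl⟩; exact hVmono hx hbIcc hx.2⟩)
    exact ⟨g, h1, h2⟩
  suffices H : ∀ t ∈ Icc a b, Y t ≤ g t by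
    intro t ht; rw [hgV ht]; exact H t ht
  have hYc : ContinuousOn Y (Icc a b) := hY.continuousOn
  -- bounds and compact set
  obtain ⟨R0, hR0⟩ : ∃ C, ∀ x ∈ Icc a b, ‖Y x‖ ≤ C :=
    isCompact_Icc.exists_bound_of_continuousOn hYc
  set R : ℝ := max R0 (max ‖g a‖ ‖g b‖) with hRdef
  have hYK : ∀ x ∈ Icc a b, Y x ∈ Icc (-R) R := by
    intro x hx
    have h1 := hR0 x hx
    have h2 : |Y x| ≤ R0 := h1
    have h3 : R0 ≤ R := le_max_left _ _
    constructor
    · have := abs_le.1 h2; linarith [this.1]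
    · have := abs_le.1 h2; linarith [this.2]
  have hgK : ∀ x ∈ Icc a b, g x ∈ Icc (-R) R := by
    intro x hx
    have h1 : g a ≤ g x := hgmono hx.1
    have h2 : g x ≤ g b := hgmono hx.2
    have h3 : ‖g a‖ ≤ R := le_trans (le_max_left _ _) (le_max_right _ _)
    have h4 : ‖g b‖ ≤ R := le_trans (le_max_right _ _) (le_max_right _ _)
    have h5 := abs_le.1 (h3 : |g a| ≤ R)
    have h6 := abs_le.1 (h4 : |g b| ≤ R)
    exact ⟨by linarith [h5.1], by linarith [h6.2]⟩
  -- Lipschitz bound for F on the compact set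
  obtain ⟨L, hL⟩ : ∃ L, ∀ y ∈ Icc (-R : ℝ) R, ‖deriv F y‖ ≤ L :=
    isCompact_Icc.exists_bound_of_continuousOn (hF.continuous_deriv le_rfl).continuousOn
  have hLnn : 0 ≤ L := le_trans (norm_nonneg _) (hL (g a) (hgK a haIcc))
  have hFdiff : Differentiable ℝ F := hF.differentiable one_ne_zero
  -- the positive part of `Y - g`
  set h : ℝ → ℝ := fun x => max (Y x - g x) 0 with hhdef
  have hnonneg : ∀ x, 0 ≤ h x := fun x => le_max_right _ _
  have hlip : ∀ x ∈ Icc a b, F (Y x) - F (g x) ≤ L * h x := by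
    intro x hx
    rcases le_total (Y x) (g x) with hle | hle
    · have h1 : F (Y x) ≤ F (g x) := hFmono hle
      have h2 : 0 ≤ L * h x := mul_nonneg hLnn (hnonneg x)
      linarith
    · have hm : h x = Y x - g x := max_eq_left (by linarith)
      have := (convex_Icc (-R) R).norm_image_sub_le_of_norm_deriv_le
        (fun y _ => (hFdiff y : DifferentiableAt ℝ F y)) hL (hgK x hx) (hYK x hx)
      have h1 : |F (Y x) - F (g x)| ≤ L * |Y x - g x| := this
      rw [abs_of_nonneg (by linarith : (0:ℝ) ≤ Y x - g x)] at h1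
      rw [hm]
      calc F (Y x) - F (g x) ≤ |F (Y x) - F (g x)| := le_abs_self _
        _ ≤ L * (Y x - g x) := h1
  -- integrability of h on [a,b]
  have hgmeas : Measurable g := hgmono.measurable
  have hmeas : AEStronglyMeasurable h (volume.restrict (Icc a b)) := by
    have h1 : AEStronglyMeasurable (fun x => Y x - g x) (volume.restrict (Icc a b)) :=
      (hYc.aestronglyMeasurable measurableSet_Icc).sub hgmeas.aestronglyMeasurable
    exact h1.sup aestronglyMeasurable_const
  have hbdd : ∀ x ∈ Icc a b, h x ≤ R + R := by
    intro x hx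
    refine max_le ?_ (by positivity)
    have h1 := (hYK x hx).2
    have h2 := (hgK x hx).1
    linarith
  have hposR : (0:ℝ) ≤ R := le_trans (norm_nonneg (g a))
    (le_trans (le_max_left _ _) (le_max_right _ _))
  have hIntIcc : IntegrableOn h (Icc a b) volume := by
    refine Integrable.mono' (integrable_const (R + R)) hmeas ?_
    filter_upwards [ae_restrict_mem measurableSet_Icc] with x hx
    rw [Real.norm_eq_abs, abs_of_nonneg (hnonneg x)]
    exact hbdd x hx
  have hInth : ∀ t ∈ Icc a b, IntervalIntegrable h volume a t := fun t ht =>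
    (intervalIntegrable_iff_integrableOn_Ioc_of_le ht.1).2
      (hIntIcc.mono_set ((Ioc_subset_Icc_self).trans (Icc_subset_Icc le_rfl ht.2)))
  set u : ℝ → ℝ := fun t => ∫ x in a..t, h x with hudef
  have hunonneg : ∀ t ∈ Icc a b, 0 ≤ u t := fun t ht =>
    intervalIntegral.integral_nonneg ht.1 fun x _ => hnonneg x
  -- a.e. inequality for the derivative of g
  have hrestr : volume.restrict (Icc a b) = volume.restrict (Ioo a b) :=
    (Measure.restrict_congr_set Ioo_ae_eq_Icc).symm
  have hgae : ∀ᵐ x ∂(volume.restrict (Icc a b)), F (g x) ≤ deriv g x := by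
    rw [hrestr]
    have hV'' := hV'
    rw [hrestr] at hV''
    filter_upwards [hV'', ae_restrict_mem measurableSet_Ioo] with x hx hxIoo
    obtain ⟨v, hv, hFv⟩ := hx
    have hxy : V =ᶠ[nhds x] g := by
      filter_upwards [Icc_mem_nhds hxIoo.1 hxIoo.2] with y hy using hgV hy
    have hg' : HasDerivAt g v x := hv.congr_of_eventuallyEq hxy.symm
    rw [hg'.deriv]
    have : g x = V x := (hgV (Ioo_subset_Icc_self hxIoo)).symm
    rw [this]
    exact hFv
  -- the key integral inequality
  have hkey : ∀ t ∈ Icc a b, Y t - g t ≤ L * u t := by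
    intro t ht
    have hat : Icc a t ⊆ Icc a b := Icc_subset_Icc le_rfl ht.2
    have hFYc : ContinuousOn (fun x => F (Y x)) (Icc a t) :=
      hF.continuous.comp_continuousOn (hYc.mono hat)
    have hFYint : IntervalIntegrable (fun x => F (Y x)) volume a t := by
      apply ContinuousOn.intervalIntegrable
      rwa [uIcc_of_le ht.1]
    have hFTC : ∫ x in a..t, F (Y x) = Y t - Y a :=
      intervalIntegral.integral_eq_sub_of_hasDerivAt
        (fun x hx => hYode x (hat (by rwa [uIcc_of_le ht.1] at hx))) hFYint
    obtain ⟨hgint, hgFTC⟩ := monotone_integral_deriv_le hgmono ht.1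
    have hgint' : IntervalIntegrable (deriv g) volume a t :=
      (intervalIntegrable_iff_integrableOn_Ioc_of_le ht.1).2 hgint
    have hLh : IntervalIntegrable (fun x => L * h x) volume a t :=
      (hInth t ht).const_mul L
    have hcomp : ∫ x in a..t, (F (Y x) - deriv g x) ≤ ∫ x in a..t, L * h x := by
      apply intervalIntegral.integral_mono_ae_restrict ht.1 (hFYint.sub hgint') hLh
      have hsub := ae_restrict_of_ae_restrict_of_subset hat hgae
      filter_upwards [hsub, ae_restrict_mem measurableSet_Icc] with x h1 h2
      have := hlip x (hat h2)
      show F (Y x) - deriv g x ≤ L * h x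
      linarith
    have e1 : ∫ x in a..t, (F (Y x) - deriv g x)
        = (Y t - Y a) - ∫ x in a..t, deriv g x := by
      rw [intervalIntegral.integral_sub hFYint hgint', hFTC]
    have e2 : ∫ x in a..t, L * h x = L * u t := by
      exact intervalIntegral.integral_const_mul L h
    have hYag : Y a ≤ g a := by rw [← hgV haIcc]; exact hYa
    have hchain : (Y t - Y a) - (g t - g a) ≤ L * u t := by
      calc (Y t - Y a) - (g t - g a)
          ≤ (Y t - Y a) - ∫ x in a..t, deriv g x := by linarith
        _ = ∫ x in a..t, (F (Y x) - deriv g x) := e1.symm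
        _ ≤ ∫ x in a..t, L * h x := hcomp
        _ = L * u t := e2
    linarith
  have hhu : ∀ t ∈ Icc a b, h t ≤ L * u t := fun t ht =>
    max_le (hkey t ht) (mul_nonneg hLnn (hunonneg t ht))
  -- u is continuous
  have hucont : ContinuousOn u (Icc a b) := by
    have := intervalIntegral.continuousOn_primitive_interval (a := a) (b := b) (f := h)
      (μ := volume) (by rwa [uIcc_of_le hab])
    rwa [uIcc_of_le hab] at this
  have huint : IntegrableOn u (Icc a b) volume := hucont.integrableOn_compact isCompact_Icc
  set w : ℝ → ℝ := fun t => ∫ x in a..t, u x with hwdef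
  have hwcont : ContinuousOn w (Icc a b) := by
    have := intervalIntegral.continuousOn_primitive_interval (a := a) (b := b) (f := u)
      (μ := volume) (by rwa [uIcc_of_le hab])
    rwa [uIcc_of_le hab] at this
  have hwnonneg : ∀ t ∈ Icc a b, 0 ≤ w t := fun t ht =>
    intervalIntegral.integral_nonneg ht.1 fun x hx =>
      hunonneg x ⟨hx.1, hx.2.trans ht.2⟩
  -- u t ≤ L * w t
  have hulw : ∀ t ∈ Icc a b, u t ≤ L * w t := by
    intro t ht
    have hat : Icc a t ⊆ Icc a b := Icc_subset_Icc le_rfl ht.2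
    have huint' : IntervalIntegrable u volume a t := by
      apply ContinuousOn.intervalIntegrable
      rw [uIcc_of_le ht.1]; exact hucont.mono hat
    have hLu : IntervalIntegrable (fun x => L * u x) volume a t := huint'.const_mul L
    calc u t = ∫ x in a..t, h x := rfl
      _ ≤ ∫ x in a..t, L * u x := by
          apply intervalIntegral.integral_mono_on ht.1 (hInth t ht) hLu
          intro x hx
          exact hhu x (hat hx)
      _ = L * w t := intervalIntegral.integral_const_mul L u
  -- derivative of w
  have hw' : ∀ t ∈ Ioo a b, HasDerivAt w (u t) t := by
    intro t ht
    have hat : Icc a t ⊆ Icc a b := Icc_subset_Icc le_rfl ht.2.le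
    have huint' : IntervalIntegrable u volume a t := by
      apply ContinuousOn.intervalIntegrable
      rw [uIcc_of_le ht.1.le]; exact hucont.mono hat
    refine intervalIntegral.integral_hasDerivAt_right huint' ?_ ?_
    · exact (hucont.mono Ioo_subset_Icc_self).stronglyMeasurableAtFilter isOpen_Ioo t ht
    · exact hucont.continuousAt (Icc_mem_nhds ht.1 ht.2)
  -- Gronwall-type argument: φ = w * exp(-L t) is antitone
  set φ : ℝ → ℝ := fun t => w t * Real.exp (-L * t) with hφdef
  have hexp : ∀ x : ℝ, HasDerivAt (fun t : ℝ => Real.exp (-L * t))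
      (Real.exp (-L * x) * (-L * 1)) x := fun x =>
    (HasDerivAt.exp ((hasDerivAt_id x).const_mul (-L)))
  have hφ' : ∀ x ∈ Ioo a b, HasDerivAt φ
      (u x * Real.exp (-L * x) + w x * (Real.exp (-L * x) * (-L * 1))) x := by
    intro x hx
    exact (hw' x hx).mul (hexp x)
  have hφant : AntitoneOn φ (Icc a b) := by
    apply antitoneOn_of_deriv_nonpos (convex_Icc a b)
    · exact hwcont.mul (Real.continuous_exp.comp (continuous_const.mul continuous_id)).continuousOn
    · rw [interior_Icc]
      intro x hx
      exact (hφ' x hx).differentiableAt.differentiableWithinAt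
    · rw [interior_Icc]
      intro x hx
      rw [(hφ' x hx).deriv]
      have h1 : u x ≤ L * w x := hulw x (Ioo_subset_Icc_self hx)
      have h2 : (0:ℝ) < Real.exp (-L * x) := Real.exp_pos _
      nlinarith
  -- conclude
  intro t ht
  have hφa : φ a = 0 := by
    have hwa : w a = 0 := intervalIntegral.integral_same
    simp [hφdef, hwa]
  have hφt : φ t ≤ 0 := by
    rw [← hφa]
    exact hφant haIcc ht ht.1
  have hexppos : (0:ℝ) < Real.exp (-L * t) := Real.exp_pos _
  have hwt : w t ≤ 0 := by
    by_contra hcon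
    push_neg at hcon
    have : 0 < φ t := mul_pos hcon hexppos
    linarith
  have hut : u t ≤ 0 := le_trans (hulw t ht) (mul_nonpos_of_nonneg_of_nonpos hLnn hwt)
  have := hkey t ht
  have : Y t - g t ≤ 0 := le_trans this (mul_nonpos_of_nonneg_of_nonpos hLnn hut)
  linarith
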